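/- Let H be a finite-dimensional complex Hilbert space and let {K_α} and {K'_α} be two families of operators on H (with the same finite index set) that define the same completely positive map, i.e. ∑_α K_α ρ K_α† = ∑_α K'_α ρ K'_α† for all operators ρ on H. If the K_α are linearly independent, then there exists a unitary matrix V = (V_{βα}) such that K'_α = ∑_β K_β V_{βα} for all α. -/

import Mathlib

open Matrix BigOperators ComplexConjugate

noncomputable def vecEquiv (n : ℕ) : Matrix (Fin n) (Fin n) ℂ ≃ₗ[ℂ] EuclideanSpace ℂ (Fin n × Fin n) :=
  (LinearEquiv.curry ℂ ℂ (Fin n) (Fin n)).symm.trans (WithLp.linearEquiv 2 ℂ (Fin n × Fin n → ℂ)).symm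

theorem vecEquiv_apply {n : ℕ} (A : Matrix (Fin n) (Fin n) ℂ) (p : Fin n × Fin n) :
    vecEquiv n A p = A p.1 p.2 := rfl

theorem vec_inner {n : ℕ} (A B : Matrix (Fin n) (Fin n) ℂ) :
    (inner ℂ (vecEquiv n A) (vecEquiv n B) : ℂ) = ∑ p : Fin n × Fin n, conj (A p.1 p.2) * B p.1 p.2 := by
  simp [PiLp.inner_apply, vecEquiv_apply, RCLike.inner_apply]
  exact Finset.sum_congr rfl fun _ _ => mul_comm _ _

theorem mulStd {n : ℕ} (A B : Matrix (Fin n) (Fin n) ℂ) (i j k l : Fin n) :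
    ((A * single j l 1 * Bᴴ : Matrix (Fin n) (Fin n) ℂ)) i k = A i j * conj (B k l) := by
  simp [Matrix.mul_apply, Matrix.single, conjTranspose_apply, Finset.sum_ite_eq,
    Finset.mul_sum, mul_ite, ite_mul, Finset.sum_ite_eq']
  rw [Finset.sum_eq_single l, Finset.sum_eq_single j] <;> simp +contextual [eq_comm]

theorem kraus_aux {m : ℕ} (E : Type*) [NormedAddCommGroup E] [InnerProductSpace ℂ E] [FiniteDimensional ℂ E]
    (L L' : Fin m → E)
    (hPair : ∀ x y : E, ∑ α, (inner ℂ x (L α) : ℂ) * inner ℂ (L α) y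
                      = ∑ α, (inner ℂ x (L' α) : ℂ) * inner ℂ (L' α) y)
    (hLindep : LinearIndependent ℂ L) :
    ∃ V : Matrix (Fin m) (Fin m) ℂ, V ∈ Matrix.unitaryGroup (Fin m) ℂ ∧
      ∀ α, L' α = ∑ β, V β α • L β := by
  classical
  set S := Submodule.span ℂ (Set.range L) with hS
  have hLS : ∀ β, L β ∈ S := fun β => Submodule.subset_span ⟨β, rfl⟩
  -- L' α is orthogonal to Sᗮ
  have hSorth : ∀ x, x ∈ Sᗮ → ∀ α, (inner ℂ x (L' α) : ℂ) = 0 := by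
    intro x hx α
    have hL0 : ∀ α', (inner ℂ x (L α') : ℂ) = 0 := fun α' =>
      Submodule.inner_left_of_mem_orthogonal (hLS α') hx
    have h := hPair x x
    simp only [hL0, zero_mul, Finset.sum_const_zero] at h
    have h2 : ∀ α', (inner ℂ x (L' α') : ℂ) * inner ℂ (L' α') x
        = (Complex.normSq (inner ℂ x (L' α') : ℂ) : ℂ) := by
      intro α'
      rw [← inner_conj_symm (L' α') x, Complex.mul_conj]
    simp only [h2] at h
    have h3 : ∑ α', Complex.normSq (inner ℂ x (L' α') : ℂ) = 0 := by
      exact_mod_cast h.symm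
    have h4 := (Finset.sum_eq_zero_iff_of_nonneg (fun i _ => Complex.normSq_nonneg _)).1 h3
    have := h4 α (Finset.mem_univ α)
    exact Complex.normSq_eq_zero.1 this
  have hmem : ∀ α, L' α ∈ S := by
    intro α
    rw [← Submodule.orthogonal_orthogonal S]
    exact (Submodule.mem_orthogonal _ _).2 fun u hu => hSorth u hu α
  -- basis of S from L
  let b : Module.Basis (Fin m) ℂ S := Module.Basis.span hLindep
  set V : Matrix (Fin m) (Fin m) ℂ := Matrix.of fun β α => b.repr ⟨L' α, hmem α⟩ β with hV
  have hrepr : ∀ α, L' α = ∑ β, V β α • L β := by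
    intro α
    have h : L' α = ((∑ i, (b.repr ⟨L' α, hmem α⟩) i • b i : S) : E) := by
      rw [b.sum_repr ⟨L' α, hmem α⟩]
    rw [h]
    push_cast
    refine Finset.sum_congr rfl fun β _ => ?_
    congr 1
    exact congrArg Subtype.val (Module.Basis.span_apply hLindep β)
  -- dual family
  let Φ : S →ₗ[ℂ] (Fin m → ℂ) :=
    LinearMap.pi fun β => ((innerSL ℂ (L β)).toLinearMap).comp S.subtype
  have hΦinj : Function.Injective Φ := by
    rw [← LinearMap.ker_eq_bot, LinearMap.ker_eq_bot']
    intro x hx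
    have hx0 : ∀ β, (inner ℂ (L β) (x : E) : ℂ) = 0 := fun β => congrFun hx β
    have hxv : ∀ v ∈ S, (inner ℂ v (x : E) : ℂ) = 0 := by
      intro v hv
      induction hv using Submodule.span_induction with
      | mem v hv => obtain ⟨β, rfl⟩ := hv; exact hx0 β
      | zero => simp
      | add u v _ _ hu hv => rw [inner_add_left, hu, hv, add_zero]
      | smul c v _ hv => rw [inner_smul_left, hv, mul_zero]
    have : (inner ℂ (x : E) (x : E) : ℂ) = 0 := hxv x x.2
    have hx0' : (x : E) = 0 := inner_self_eq_zero.1 this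
    exact Subtype.ext hx0'
  have hdim : Module.finrank ℂ S = Module.finrank ℂ (Fin m → ℂ) := by
    rw [hS, finrank_span_eq_card hLindep]
    simp
  have hΦsurj : Function.Surjective Φ :=
    (LinearMap.injective_iff_surjective_of_finrank_eq_finrank hdim).1 hΦinj
  choose Adual hAdual using fun γ => hΦsurj (Pi.single γ 1)
  have hdual : ∀ γ β, (inner ℂ (L β) ((Adual γ : S) : E) : ℂ) = if β = γ then 1 else 0 := by
    intro γ β
    have := congrFun (hAdual γ) β
    simpa [Φ, Pi.single_apply] using this
  -- unitarity
  have hVV : ∀ γ δ, ∑ α, V γ α * conj (V δ α) = if γ = δ then 1 else 0 := by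
    intro γ δ
    have h := hPair ((Adual γ : S) : E) ((Adual δ : S) : E)
    have hlhs : ∀ α, (inner ℂ ((Adual γ : S) : E) (L α) : ℂ) * inner ℂ (L α) ((Adual δ : S) : E)
        = (if α = γ then 1 else 0) * (if α = δ then 1 else 0) := by
      intro α
      rw [← inner_conj_symm ((Adual γ : S) : E) (L α)] at *
      rw [hdual γ α, hdual δ α]
      simp [apply_ite conj]
    have hrhs : ∀ α, (inner ℂ ((Adual γ : S) : E) (L' α) : ℂ) * inner ℂ (L' α) ((Adual δ : S) : E)
        = V γ α * conj (V δ α) := by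
      intro α
      have e1 : (inner ℂ ((Adual γ : S) : E) (L' α) : ℂ) = V γ α := by
        rw [hrepr α, inner_sum]
        simp_rw [inner_smul_right]
        rw [Finset.sum_eq_single γ]
        · rw [← inner_conj_symm ((Adual γ : S) : E) (L γ), hdual γ γ]; simp
        · intro β _ hβ
          rw [← inner_conj_symm ((Adual γ : S) : E) (L β), hdual γ β, if_neg hβ]; simp
        · simp
      have e2 : (inner ℂ (L' α) ((Adual δ : S) : E) : ℂ) = conj (V δ α) := by
        rw [← inner_conj_symm]
        congr 1
        rw [hrepr α, inner_sum]
        simp_rw [inner_smul_right]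
        rw [Finset.sum_eq_single δ]
        · rw [← inner_conj_symm ((Adual δ : S) : E) (L δ), hdual δ δ]; simp
        · intro β _ hβ
          rw [← inner_conj_symm ((Adual δ : S) : E) (L β), hdual δ β, if_neg hβ]; simp
        · simp
      rw [e1, e2]
    rw [Finset.sum_congr rfl fun α _ => hlhs α, Finset.sum_congr rfl fun α _ => hrhs α] at h
    rw [← h]
    simp [Finset.sum_ite_eq', eq_comm]
  refine ⟨V, ?_, hrepr⟩
  rw [Matrix.mem_unitaryGroup_iff]
  ext γ δ
  rw [Matrix.mul_apply, Matrix.one_apply]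
  simpa [Matrix.star_apply] using hVV γ δ

theorem kraus_unitary_freedom {n m : ℕ}
    (K K' : Fin m → Matrix (Fin n) (Fin n) ℂ)
    (hsame : ∀ ρ : Matrix (Fin n) (Fin n) ℂ,
      ∑ α, K α * ρ * (K α)ᴴ = ∑ α, K' α * ρ * (K' α)ᴴ)
    (hindep : LinearIndependent ℂ K) :
    ∃ V : Matrix (Fin m) (Fin m) ℂ, V ∈ Matrix.unitaryGroup (Fin m) ℂ ∧
      ∀ α, K' α = ∑ β, V β α • K β := by
  classical
  have hChoi : ∀ i j k l : Fin n,
      ∑ α, K α i j * conj (K α k l) = ∑ α, K' α i j * conj (K' α k l) := by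
    intro i j k l
    have h := congrFun (congrFun (hsame (single j l 1)) i) k
    simpa [Matrix.sum_apply, mulStd] using h
  set L : Fin m → EuclideanSpace ℂ (Fin n × Fin n) := fun β => vecEquiv n (K β) with hL
  set L' : Fin m → EuclideanSpace ℂ (Fin n × Fin n) := fun β => vecEquiv n (K' β) with hL'
  have key : ∀ (J : Fin m → Matrix (Fin n) (Fin n) ℂ) (A B : Matrix (Fin n) (Fin n) ℂ),
      ∑ α, (∑ p : Fin n × Fin n, conj (A p.1 p.2) * J α p.1 p.2) *
          (∑ q : Fin n × Fin n, conj (J α q.1 q.2) * B q.1 q.2) =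
        ∑ p : Fin n × Fin n, ∑ q : Fin n × Fin n,
          (conj (A p.1 p.2) * B q.1 q.2) * ∑ α, J α p.1 p.2 * conj (J α q.1 q.2) := by
    intro J A B
    simp_rw [Finset.sum_mul_sum, Finset.mul_sum]
    rw [Finset.sum_comm]
    refine Finset.sum_congr rfl fun p _ => ?_
    rw [Finset.sum_comm]
    refine Finset.sum_congr rfl fun q _ => ?_
    refine Finset.sum_congr rfl fun α _ => ?_
    ring
  have hPair : ∀ x y : EuclideanSpace ℂ (Fin n × Fin n),
      ∑ α, (inner ℂ x (L α) : ℂ) * inner ℂ (L α) y = ∑ α, (inner ℂ x (L' α) : ℂ) * inner ℂ (L' α) y := by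
    intro x y
    set A := (vecEquiv n).symm x with hA
    set B := (vecEquiv n).symm y with hB
    have hx : x = vecEquiv n A := by simp [hA]
    have hy : y = vecEquiv n B := by simp [hB]
    rw [hx, hy]
    simp only [hL, hL', vec_inner, key]
    refine Finset.sum_congr rfl fun p _ => Finset.sum_congr rfl fun q _ => ?_
    rw [hChoi]
  have hLindep : LinearIndependent ℂ L :=
    hindep.map' (vecEquiv n).toLinearMap (vecEquiv n).ker
  obtain ⟨V, hVU, hVrep⟩ := kraus_aux (EuclideanSpace ℂ (Fin n × Fin n)) L L' hPair hLindep
  refine ⟨V, hVU, fun α => ?_⟩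
  apply (vecEquiv n).injective
  rw [map_sum]
  simp_rw [_root_.map_smul]
  exact hVrep α
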